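/- With X̂, Ŷ defined from (X,Y,i,j) as X̂ = [[0,−j₂],[i₁,X]], Ŷ = [[0,j₁],[i₂,Y]], the quadruple (X,Y,i,j) is stable (there is no proper subspace S ⊊ ℂ^k with im i ⊆ S, XS ⊆ S, YS ⊆ S) if and only if e₁ ∈ ℂ^{k+1} is a cyclic vector for the pair (X̂,Ŷ). -/

import Mathlib

open Matrix

def rowm {k : ℕ} (v : Fin k → ℂ) : Matrix (Fin 1) (Fin k) ℂ := Matrix.of fun _ c => v c

def colm {k : ℕ} (v : Fin k → ℂ) : Matrix (Fin k) (Fin 1) ℂ := Matrix.of fun r _ => v r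

def hatX {k : ℕ} (X : Matrix (Fin k) (Fin k) ℂ) (i : Matrix (Fin k) (Fin 2) ℂ)
    (j : Matrix (Fin 2) (Fin k) ℂ) : Matrix (Fin 1 ⊕ Fin k) (Fin 1 ⊕ Fin k) ℂ :=
  Matrix.fromBlocks 0 (-(rowm (fun c => j 1 c))) (colm (fun r => i r 0)) X

def hatY {k : ℕ} (Y : Matrix (Fin k) (Fin k) ℂ) (i : Matrix (Fin k) (Fin 2) ℂ)
    (j : Matrix (Fin 2) (Fin k) ℂ) : Matrix (Fin 1 ⊕ Fin k) (Fin 1 ⊕ Fin k) ℂ :=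
  Matrix.fromBlocks 0 (rowm (fun c => j 0 c)) (colm (fun r => i r 1)) Y

/-- `(X,Y,i)` is stable: no proper subspace S contains the columns of i and is invariant
under X and Y. -/
def Stable {k : ℕ} (X Y : Matrix (Fin k) (Fin k) ℂ) (i : Matrix (Fin k) (Fin 2) ℂ) : Prop :=
  ¬ ∃ S : Submodule ℂ (Fin k → ℂ), S ≠ ⊤ ∧ (∀ c : Fin 2, (fun r => i r c) ∈ S) ∧
      (∀ x ∈ S, X.mulVec x ∈ S) ∧ (∀ x ∈ S, Y.mulVec x ∈ S)

/-- cyclicity of a vector for a pair of matrices on an arbitrary finite index type -/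
def IsCyclicVec {I : Type} [Fintype I] [DecidableEq I] (A B : Matrix I I ℂ) (v : I → ℂ) : Prop :=
  ∀ S : Submodule ℂ (I → ℂ), v ∈ S → (∀ x ∈ S, A.mulVec x ∈ S) →
    (∀ x ∈ S, B.mulVec x ∈ S) → S = ⊤

lemma hatX_inr {k : ℕ} (X : Matrix (Fin k) (Fin k) ℂ) (i : Matrix (Fin k) (Fin 2) ℂ)
    (j : Matrix (Fin 2) (Fin k) ℂ) (w : Fin 1 ⊕ Fin k → ℂ) :
    (fun r => (hatX X i j).mulVec w (Sum.inr r))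
      = X.mulVec (fun c => w (Sum.inr c)) + w (Sum.inl 0) • (fun r => i r 0) := by
  funext r
  simp [hatX, mulVec, dotProduct, Fintype.sum_sum_type, colm, Fin.sum_univ_one]
  ring

lemma hatY_inr {k : ℕ} (Y : Matrix (Fin k) (Fin k) ℂ) (i : Matrix (Fin k) (Fin 2) ℂ)
    (j : Matrix (Fin 2) (Fin k) ℂ) (w : Fin 1 ⊕ Fin k → ℂ) :
    (fun r => (hatY Y i j).mulVec w (Sum.inr r))
      = Y.mulVec (fun c => w (Sum.inr c)) + w (Sum.inl 0) • (fun r => i r 1) := by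
  funext r
  simp [hatY, mulVec, dotProduct, Fintype.sum_sum_type, colm, Fin.sum_univ_one]
  ring

/-- (X,Y,i,j) is stable iff e₁ ∈ ℂ^{k+1} is cyclic for (X̂,Ŷ). -/
theorem stmt8 (k : ℕ) (X Y : Matrix (Fin k) (Fin k) ℂ) (i : Matrix (Fin k) (Fin 2) ℂ)
    (j : Matrix (Fin 2) (Fin k) ℂ) :
    Stable X Y i ↔
      IsCyclicVec (hatX X i j) (hatY Y i j)
        (fun x : Fin 1 ⊕ Fin k => if x = Sum.inl 0 then (1 : ℂ) else 0) := by
  set v : Fin 1 ⊕ Fin k → ℂ := fun x => if x = Sum.inl 0 then (1 : ℂ) else 0 with hv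
  have hvinr : ∀ r : Fin k, v (Sum.inr r) = 0 := by intro r; simp [hv]
  have hvinl : v (Sum.inl 0) = 1 := by simp [hv]
  constructor
  · intro hs S he hA hB
    set S' : Submodule ℂ (Fin k → ℂ) := S.map (LinearMap.funLeft ℂ ℂ Sum.inr) with hS'
    have hproj : ∀ w ∈ S, (fun r => w (Sum.inr r)) ∈ S' := fun w hw => ⟨w, hw, rfl⟩
    have hi1 : (fun r => i r 0) ∈ S' := by
      have h1 := hproj _ (hA v he)
      rw [show (fun r => (hatX X i j).mulVec v (Sum.inr r)) = (fun r => i r 0) from ?_] at h1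
      · exact h1
      · rw [hatX_inr, show (fun c => v (Sum.inr c)) = (0 : Fin k → ℂ) from funext hvinr,
          mulVec_zero, hvinl, one_smul, zero_add]
    have hi2 : (fun r => i r 1) ∈ S' := by
      have h1 := hproj _ (hB v he)
      rw [show (fun r => (hatY Y i j).mulVec v (Sum.inr r)) = (fun r => i r 1) from ?_] at h1
      · exact h1
      · rw [hatY_inr, show (fun c => v (Sum.inr c)) = (0 : Fin k → ℂ) from funext hvinr,
          mulVec_zero, hvinl, one_smul, zero_add]
    have hXS' : ∀ x ∈ S', X.mulVec x ∈ S' := by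
      rintro x ⟨w, hw, rfl⟩
      have h1 := hproj _ (hA w hw)
      rw [hatX_inr] at h1
      have h2 := S'.sub_mem h1 (S'.smul_mem (w (Sum.inl 0)) hi1)
      exact (by simpa using h2 : X.mulVec (fun c => w (Sum.inr c)) ∈ S')
    have hYS' : ∀ x ∈ S', Y.mulVec x ∈ S' := by
      rintro x ⟨w, hw, rfl⟩
      have h1 := hproj _ (hB w hw)
      rw [hatY_inr] at h1
      have h2 := S'.sub_mem h1 (S'.smul_mem (w (Sum.inl 0)) hi2)
      exact (by simpa using h2 : Y.mulVec (fun c => w (Sum.inr c)) ∈ S')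
    have hS'top : S' = ⊤ := by
      by_contra hne
      exact hs ⟨S', hne, fun c => by fin_cases c <;> [exact hi1; exact hi2], hXS', hYS'⟩
    rw [Submodule.eq_top_iff']
    intro y
    have hy : (fun r => y (Sum.inr r)) ∈ S' := hS'top ▸ Submodule.mem_top
    obtain ⟨w, hw, hwp⟩ := hy
    have hyw : y = w + (y (Sum.inl 0) - w (Sum.inl 0)) • v := by
      funext x
      cases x with
      | inl a =>
        have ha : a = 0 := Subsingleton.elim _ _
        subst ha
        simp [hvinl]
      | inr r =>
        have := congrFun hwp r
        simp only [LinearMap.funLeft_apply, Function.comp] at this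
        simp [hvinr, this]
    rw [hyw]
    exact S.add_mem hw (S.smul_mem _ he)
  · intro hc hst
    obtain ⟨S, hne, hiS, hXS, hYS⟩ := hst
    set Shat : Submodule ℂ (Fin 1 ⊕ Fin k → ℂ) := S.comap (LinearMap.funLeft ℂ ℂ Sum.inr) with hShat
    have hmem : ∀ w : Fin 1 ⊕ Fin k → ℂ, w ∈ Shat ↔ (fun r => w (Sum.inr r)) ∈ S := fun w => Iff.rfl
    have hve : v ∈ Shat := by
      rw [hmem]
      rw [show (fun r => v (Sum.inr r)) = 0 from funext hvinr]
      exact S.zero_mem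
    have hXinv : ∀ w ∈ Shat, (hatX X i j).mulVec w ∈ Shat := by
      intro w hw
      rw [hmem] at hw ⊢
      rw [hatX_inr]
      exact S.add_mem (hXS _ hw) (S.smul_mem _ (hiS 0))
    have hYinv : ∀ w ∈ Shat, (hatY Y i j).mulVec w ∈ Shat := by
      intro w hw
      rw [hmem] at hw ⊢
      rw [hatY_inr]
      exact S.add_mem (hYS _ hw) (S.smul_mem _ (hiS 1))
    have htop := hc Shat hve hXinv hYinv
    apply hne
    rw [Submodule.eq_top_iff']
    intro x
    have : Sum.elim (0 : Fin 1 → ℂ) x ∈ Shat := htop ▸ Submodule.mem_top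
    rw [hmem] at this
    exact this
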